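/- Let λ > 0, y > 0 and t ∈ (0,1). Define q̃_u(x,z) := (1/(xz√(2πu))) · ( exp(−(x−z)²/(2u)) − exp(−(x+z)²/(2u)) ) for x, z, u > 0, q̃_u(0,z) := (2/√(2πu³)) · exp(−z²/(2u)), and f_{Ẑ^λ}(s) := (λ/√(2π(1−s)s³)) · exp(−λ²(1−s)/(2s)) for s ∈ (0,1). Then ∫_t^1 ( q̃_{s−t}(y,λ) / q̃_s(0,λ) ) · f_{Ẑ^λ}(s) ds = Φ^{1,λ}(t,y), where Φ^{1,λ}(t,y) := (1/(2√2 · y)) · exp(λ²/2) · ∫_{(y−λ)²/(2(1−t))}^{(y+λ)²/(2(1−t))} e^{−u} u^{−1/2} du. -/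

import Mathlib

open Set


open MeasureTheory Real

/-- `q̃_u(x,z)` for `x, z, u > 0` (Bessel(3) transition kernel factor). -/
noncomputable def qtilde (u x z : ℝ) : ℝ :=
  1 / (x * z * Real.sqrt (2 * π * u)) *
    (Real.exp (-(x - z) ^ 2 / (2 * u)) - Real.exp (-(x + z) ^ 2 / (2 * u)))

/-- `q̃_u(0,z)`. -/
noncomputable def qtildeZero (u z : ℝ) : ℝ :=
  2 / Real.sqrt (2 * π * u ^ 3) * Real.exp (-z ^ 2 / (2 * u))

/-- The density `f_{Ẑ^λ}` of the last exit time from `λ > 0`. -/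
noncomputable def fZhat (lam s : ℝ) : ℝ :=
  lam / Real.sqrt (2 * π * (1 - s) * s ^ 3) * Real.exp (-lam ^ 2 * (1 - s) / (2 * s))

/-- `Φ^{1,λ}(t,y)`. -/
noncomputable def Phi1 (lam t y : ℝ) : ℝ :=
  1 / (2 * Real.sqrt 2 * y) * Real.exp (lam ^ 2 / 2) *
    ∫ u in (y - lam) ^ 2 / (2 * (1 - t))..(y + lam) ^ 2 / (2 * (1 - t)),
      Real.exp (-u) / Real.sqrt u

/- Auxiliary lemmas -/
lemma cov_Ioo (a b : ℝ) (hab : a < b) (g : ℝ → ℝ) :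
    ∫ s in Ioo a b, g s
      = ∫ w in Ioi (0:ℝ),
          (2 * (b - a) * w / (1 + w ^ 2) ^ 2) * g (a + (b - a) * (1 + w ^ 2)⁻¹) := by
  have hT : 0 < b - a := sub_pos.2 hab
  set T := b - a with hTdef
  set φ : ℝ → ℝ := fun w => a + T * (1 + w ^ 2)⁻¹ with hφ
  set φ' : ℝ → ℝ := fun w => T * (-(2 * w) / ((1 + w ^ 2) ^ 2)) with hφ'
  have hpos : ∀ w : ℝ, (0:ℝ) < 1 + w ^ 2 := fun w => by positivity
  have hder : ∀ w ∈ Ioi (0:ℝ), HasDerivWithinAt φ (φ' w) (Ioi 0) w := by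
    intro w _
    have h1 : HasDerivAt (fun w : ℝ => 1 + w ^ 2) (2 * w) w := by
      simpa using (hasDerivAt_pow 2 w).const_add 1
    have h2 := h1.inv (hpos w).ne'
    exact ((h2.const_mul T).const_add a).hasDerivWithinAt
  have hinj : InjOn φ (Ioi 0) := by
    intro u hu v hv huv
    simp only [hφ] at huv
    have h1 : (1 + u ^ 2)⁻¹ = (1 + v ^ 2)⁻¹ :=
      mul_left_cancel₀ hT.ne' (by linarith)
    have h2 : 1 + u ^ 2 = 1 + v ^ 2 := by
      have := congrArg Inv.inv h1
      simpa [inv_inv] using this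
    have hu' : (0:ℝ) < u := hu
    have hv' : (0:ℝ) < v := hv
    nlinarith [sq_nonneg (u - v), sq_nonneg (u + v)]
  have himg : φ '' Ioi 0 = Ioo a b := by
    ext s
    constructor
    · rintro ⟨w, hw, rfl⟩
      have hw' : (0:ℝ) < w := hw
      have h1 : (0:ℝ) < (1 + w ^ 2)⁻¹ := by positivity
      have h2 : (1 + w ^ 2)⁻¹ < 1 := by
        rw [inv_lt_one_iff₀]; right; nlinarith
      constructor
      · simp only [hφ]; nlinarith
      · simp only [hφ]; nlinarith
    · rintro ⟨hs1, hs2⟩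
      have hst : 0 < s - a := by linarith
      have hbs : 0 < b - s := by linarith
      refine ⟨Real.sqrt ((b - s) / (s - a)), ?_, ?_⟩
      · exact Real.sqrt_pos.2 (by positivity)
      · have hsq : Real.sqrt ((b - s) / (s - a)) ^ 2 = (b - s) / (s - a) :=
          Real.sq_sqrt (by positivity)
        simp only [hφ, hsq]
        have h3 : 1 + (b - s) / (s - a) = T / (s - a) := by
          field_simp; rw [hTdef]; ring
        rw [h3, inv_div]
        rw [mul_div_cancel₀ _ hT.ne']
        ring
  rw [← himg, integral_image_eq_integral_abs_deriv_smul measurableSet_Ioi hder hinj]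
  apply setIntegral_congr_fun measurableSet_Ioi
  intro w hw
  have hw' : (0:ℝ) < w := hw
  have habs : |φ' w| = 2 * T * w / (1 + w ^ 2) ^ 2 := by
    simp only [hφ']
    rw [abs_of_nonpos]
    · field_simp
    · apply mul_nonpos_of_nonneg_of_nonpos hT.le
      apply div_nonpos_of_nonpos_of_nonneg (by linarith)
      positivity
  simp only [smul_eq_mul, habs]
  rfl

lemma exp_slice (p q c : ℝ) (hpq : p ≤ q) (hc : 0 < c) :
    ∫ r in Ioc p q, Real.exp (-(r * c))
      = (Real.exp (-(p * c)) - Real.exp (-(q * c))) / c := by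
  rw [← intervalIntegral.integral_of_le hpq]
  have hd : ∀ r : ℝ, HasDerivAt (fun r : ℝ => -Real.exp (-(r * c)) / c)
      (Real.exp (-(r * c))) r := by
    intro r
    have h1 : HasDerivAt (fun r : ℝ => -(r * c)) (-c) r := by
      exact (hasDerivAt_mul_const (x := r) c).neg
    have h2 := ((h1.exp).neg).div_const c
    have e : -(Real.exp (-(r * c)) * -c) / c = Real.exp (-(r * c)) := by
      rw [mul_neg, neg_neg, mul_div_assoc, div_self hc.ne', mul_one]
    rw [e] at h2
    exact h2
  rw [intervalIntegral.integral_eq_sub_of_hasDerivAt (fun r _ => hd r)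
    ((Continuous.intervalIntegrable (by continuity) p q))]
  field_simp
  ring

lemma gauss_diff (p q : ℝ) (hp : 0 ≤ p) (hpq : p ≤ q) :
    ∫ w in Ioi (0:ℝ),
        (Real.exp (-(p * (1 + w ^ 2))) - Real.exp (-(q * (1 + w ^ 2)))) / (1 + w ^ 2)
      = Real.sqrt π / 2 * ∫ u in p..q, Real.exp (-u) / Real.sqrt u := by
  have hpos : ∀ w : ℝ, (0:ℝ) < 1 + w ^ 2 := fun w => by positivity
  have hint : Integrable (fun z : ℝ × ℝ => Real.exp (-(z.2 * (1 + z.1 ^ 2))))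
      ((volume.restrict (Ioi 0)).prod (volume.restrict (Ioc p q))) := by
    rw [integrable_prod_iff]
    constructor
    · refine ae_of_all _ fun w => ?_
      exact (Continuous.integrableOn_Ioc (by continuity))
    · have heq : ∀ w : ℝ, (∫ r in Ioc p q, ‖Real.exp (-(r * (1 + w ^ 2)))‖)
          = (Real.exp (-(p * (1 + w ^ 2))) - Real.exp (-(q * (1 + w ^ 2)))) / (1 + w ^ 2) := by
        intro w
        simp only [Real.norm_eq_abs, abs_of_pos (Real.exp_pos _)]
        exact exp_slice p q _ hpq (hpos w)
      have hcont : Continuous (fun w : ℝ =>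
          (Real.exp (-(p * (1 + w ^ 2))) - Real.exp (-(q * (1 + w ^ 2)))) / (1 + w ^ 2)) := by
        exact Continuous.div (by continuity) (by continuity) (fun w => (hpos w).ne')
      simp only [heq]
      refine Integrable.mono' (g := fun w : ℝ => (1 + w ^ 2)⁻¹)
        (integrable_inv_one_add_sq.integrableOn)
        (hcont.aestronglyMeasurable.restrict) ?_
      · refine ae_of_all _ fun w => ?_
        rw [Real.norm_eq_abs, abs_of_nonneg]
        · rw [div_le_iff₀ (hpos w), inv_mul_cancel₀ (hpos w).ne']
          have h1 : Real.exp (-(p * (1 + w ^ 2))) ≤ 1 := by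
            rw [Real.exp_le_one_iff]
            nlinarith [hpos w]
          nlinarith [Real.exp_pos (-(q * (1 + w ^ 2)))]
        · apply div_nonneg _ (hpos w).le
          have : -(q * (1 + w ^ 2)) ≤ -(p * (1 + w ^ 2)) := by nlinarith [hpos w]
          linarith [Real.exp_le_exp.2 this]
    · exact (Continuous.aestronglyMeasurable (by continuity))
  calc ∫ w in Ioi (0:ℝ),
        (Real.exp (-(p * (1 + w ^ 2))) - Real.exp (-(q * (1 + w ^ 2)))) / (1 + w ^ 2)
      = ∫ w in Ioi (0:ℝ), ∫ r in Ioc p q, Real.exp (-(r * (1 + w ^ 2))) := by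
        refine setIntegral_congr_fun measurableSet_Ioi fun w _ => ?_
        rw [exp_slice p q _ hpq (hpos w)]
    _ = ∫ r in Ioc p q, ∫ w in Ioi (0:ℝ), Real.exp (-(r * (1 + w ^ 2))) :=
        integral_integral_swap hint
    _ = ∫ r in Ioc p q, Real.sqrt π / 2 * (Real.exp (-r) / Real.sqrt r) := by
        refine setIntegral_congr_fun measurableSet_Ioc fun r hr => ?_
        have hr0 : 0 < r := lt_of_le_of_lt hp hr.1
        have h1 : ∀ w : ℝ, Real.exp (-(r * (1 + w ^ 2)))
            = Real.exp (-r) * Real.exp (-r * w ^ 2) := by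
          intro w; rw [← Real.exp_add]; ring_nf
        simp only [h1]
        rw [MeasureTheory.integral_const_mul, integral_gaussian_Ioi, Real.sqrt_div Real.pi_pos.le]
        field_simp
    _ = Real.sqrt π / 2 * ∫ r in Ioc p q, Real.exp (-r) / Real.sqrt r := by
        rw [MeasureTheory.integral_const_mul]
    _ = Real.sqrt π / 2 * ∫ u in p..q, Real.exp (-u) / Real.sqrt u := by
        rw [intervalIntegral.integral_of_le hpq]

lemma integrand_eq (lam y t : ℝ) (hlam : 0 < lam) (hy : 0 < y) (ht0 : 0 < t)
    (s : ℝ) (hs1 : t < s) (hs2 : s < 1) :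
    qtilde (s - t) y lam / qtildeZero s lam * fZhat lam s
      = Real.exp (lam ^ 2 / 2) / (2 * y * Real.sqrt (2 * π)) *
        ((Real.exp (-(y - lam) ^ 2 / (2 * (s - t))) -
            Real.exp (-(y + lam) ^ 2 / (2 * (s - t)))) / Real.sqrt ((s - t) * (1 - s))) := by
  have hu : 0 < s - t := by linarith
  have hr : 0 < 1 - s := by linarith
  have hs0 : 0 < s := lt_trans ht0 hs1
  have h2π : (0:ℝ) ≤ 2 * π := by positivity
  have hexp : Real.exp (-lam ^ 2 * (1 - s) / (2 * s))
      = Real.exp (lam ^ 2 / 2) * Real.exp (-lam ^ 2 / (2 * s)) := by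
    rw [← Real.exp_add]; congr 1; field_simp; ring
  unfold qtilde qtildeZero fZhat
  rw [show 2 * π * (1 - s) * s ^ 3 = (2 * π) * ((1 - s) * s ^ 3) by ring]
  rw [Real.sqrt_mul h2π (s - t), Real.sqrt_mul h2π (s ^ 3),
    Real.sqrt_mul h2π ((1 - s) * s ^ 3), Real.sqrt_mul hr.le (s ^ 3),
    Real.sqrt_mul hu.le (1 - s), hexp]
  have e1 : Real.sqrt (2 * π) ≠ 0 := by positivity
  have e2 : Real.sqrt (s - t) ≠ 0 := by positivity
  have e3 : Real.sqrt (s ^ 3) ≠ 0 := by positivity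
  have e4 : Real.sqrt (1 - s) ≠ 0 := by positivity
  have e5 : Real.exp (-lam ^ 2 / (2 * s)) ≠ 0 := Real.exp_ne_zero _
  field_simp

/-- closed form for the first component of the Radon–Nikodym density
of the Vervaat bridge with positive endpoint with respect to BES(3):
`∫_t^1 (q̃_{s−t}(y,λ)/q̃_s(0,λ)) f_{Ẑ^λ}(s) ds = Φ^{1,λ}(t,y)`. -/
theorem density_first_component (lam : ℝ) (hlam : 0 < lam) (y : ℝ) (hy : 0 < y)
    (t : ℝ) (ht : t ∈ Set.Ioo (0 : ℝ) 1) :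
    ∫ s in Set.Ioo t 1, qtilde (s - t) y lam / qtildeZero s lam * fZhat lam s =
      Phi1 lam t y := by
  obtain ⟨ht0, ht1⟩ := ht
  have hT : 0 < 1 - t := by linarith
  have hC : (0:ℝ) < Real.exp (lam ^ 2 / 2) / (2 * y * Real.sqrt (2 * π)) := by positivity
  rw [setIntegral_congr_fun measurableSet_Ioo
    (fun s hs => integrand_eq lam y t hlam hy ht0 s hs.1 hs.2)]
  rw [cov_Ioo t 1 ht1]
  have hptw : EqOn
      (fun w : ℝ => 2 * (1 - t) * w / (1 + w ^ 2) ^ 2 *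
        (Real.exp (lam ^ 2 / 2) / (2 * y * Real.sqrt (2 * π)) *
          ((Real.exp (-(y - lam) ^ 2 / (2 * ((t + (1 - t) * (1 + w ^ 2)⁻¹) - t))) -
              Real.exp (-(y + lam) ^ 2 / (2 * ((t + (1 - t) * (1 + w ^ 2)⁻¹) - t)))) /
            Real.sqrt (((t + (1 - t) * (1 + w ^ 2)⁻¹) - t) *
              (1 - (t + (1 - t) * (1 + w ^ 2)⁻¹))))))
      (fun w : ℝ => 2 * (Real.exp (lam ^ 2 / 2) / (2 * y * Real.sqrt (2 * π))) *
        ((Real.exp (-((y - lam) ^ 2 / (2 * (1 - t)) * (1 + w ^ 2))) -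
            Real.exp (-((y + lam) ^ 2 / (2 * (1 - t)) * (1 + w ^ 2)))) / (1 + w ^ 2)))
      (Ioi 0) := by
    intro w hw
    have hw0 : (0:ℝ) < w := hw
    have hc : (0:ℝ) < 1 + w ^ 2 := by positivity
    have h1t : (1:ℝ) - t ≠ 0 := by linarith
    have h2t : (2:ℝ) - t * 2 ≠ 0 := by intro h; apply h1t; linarith
    simp only
    have hargs : Real.sqrt (((t + (1 - t) * (1 + w ^ 2)⁻¹) - t) *
        (1 - (t + (1 - t) * (1 + w ^ 2)⁻¹))) = (1 - t) * w / (1 + w ^ 2) := by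
      rw [show ((t + (1 - t) * (1 + w ^ 2)⁻¹) - t) *
          (1 - (t + (1 - t) * (1 + w ^ 2)⁻¹)) = ((1 - t) * w / (1 + w ^ 2)) ^ 2 by
        field_simp; ring]
      exact Real.sqrt_sq (by positivity)
    have hden : 2 * ((t + (1 - t) * (1 + w ^ 2)⁻¹) - t) = 2 * (1 - t) / (1 + w ^ 2) := by
      field_simp
      ring
    have hE1 : Real.exp (-(y - lam) ^ 2 / (2 * ((t + (1 - t) * (1 + w ^ 2)⁻¹) - t)))
        = Real.exp (-((y - lam) ^ 2 / (2 * (1 - t)) * (1 + w ^ 2))) := by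
      congr 1
      rw [hden, div_div_eq_mul_div]
      ring
    have hE2 : Real.exp (-(y + lam) ^ 2 / (2 * ((t + (1 - t) * (1 + w ^ 2)⁻¹) - t)))
        = Real.exp (-((y + lam) ^ 2 / (2 * (1 - t)) * (1 + w ^ 2))) := by
      congr 1
      rw [hden, div_div_eq_mul_div]
      ring
    rw [hargs, hE1, hE2]
    have hA : Real.sqrt (2 * π) ≠ 0 := by positivity
    field_simp
  rw [setIntegral_congr_fun measurableSet_Ioi hptw, MeasureTheory.integral_const_mul,
    gauss_diff _ _ (by positivity) (by
      apply div_le_div_of_nonneg_right ?_ ?_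
      · nlinarith
      · positivity)]
  unfold Phi1
  have h2 : Real.sqrt (2 * π) = Real.sqrt 2 * Real.sqrt π :=
    Real.sqrt_mul (by norm_num) π
  rw [h2]
  have e1 : Real.sqrt 2 ≠ 0 := by positivity
  have e2 : Real.sqrt π ≠ 0 := by positivity
  field_simp
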